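/- arXiv:1603.03109 — 2 statements merged into one kernel-verified Lean document; each statement's English description precedes it below -/
import Mathlib

section
/- If G is a 2-edge-connected graph with at least 3 edges and an odd number of edges, then the line graph L(G) is factor-critical. -/
open Polynomial SimpleGraph

open scoped Classical in
/-- The permanental polynomial `per(xI - A(G))` of a graph. -/
noncomputable def permPoly {V : Type*} [Fintype V] (G : SimpleGraph V) : Polynomial ℤ :=
  Matrix.permanent
    ((Polynomial.X : ℤ[X]) • (1 : Matrix V V ℤ[X]) -
      Matrix.of fun i j => if G.Adj i j then (1 : ℤ[X]) else 0)

/-- The permanental nullity: multiplicity of 0 as a root of the permanental polynomial. -/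
noncomputable def perNullity {V : Type*} [Fintype V] (G : SimpleGraph V) : ℕ :=
  (permPoly G).rootMultiplicity 0

/-- Degree of a vertex in a subgraph. -/
noncomputable def subDeg {V : Type*} {G : SimpleGraph V} (H : G.Subgraph) (v : V) : ℕ :=
  (H.neighborSet v).ncard

/-- A Sachs subgraph: every component is a single edge or a cycle. -/
def IsSachs {V : Type*} {G : SimpleGraph V} (H : G.Subgraph) : Prop :=
  (∀ v ∈ H.verts, subDeg H v = 1 ∨ subDeg H v = 2) ∧
    ∀ u v, H.Adj u v → subDeg H u = 1 → subDeg H v ≠ 2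

/-- Number of cycle components of a Sachs subgraph. -/
noncomputable def cyclesCount {V : Type*} {G : SimpleGraph V} (H : G.Subgraph) : ℕ :=
  H.edgeSet.ncard + Nat.card H.coe.ConnectedComponent - H.verts.ncard

/-- Matching number. -/
noncomputable def matchingNumber {V : Type*} [Fintype V] (G : SimpleGraph V) : ℕ :=
  sSup {n | ∃ M : G.Subgraph, M.IsMatching ∧ M.edgeSet.ncard = n}

/-- A maximum matching. -/
def IsMaximumMatching {V : Type*} {G : SimpleGraph V} (M : G.Subgraph) : Prop :=
  M.IsMatching ∧ ∀ N : G.Subgraph, N.IsMatching → N.edgeSet.ncard ≤ M.edgeSet.ncard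

/-- `D(G)`: vertices missed by at least one maximum matching. -/
def DSet {V : Type*} (G : SimpleGraph V) : Set V :=
  {v | ∃ M : G.Subgraph, IsMaximumMatching M ∧ v ∉ M.verts}

/-- `B(G)`: vertices outside `D(G)` adjacent to `D(G)`. -/
def BSet {V : Type*} (G : SimpleGraph V) : Set V :=
  {v | v ∉ DSet G ∧ ∃ u ∈ DSet G, G.Adj v u}

/-- `C(G)`. -/
def CSet {V : Type*} (G : SimpleGraph V) : Set V :=
  (DSet G ∪ BSet G)ᶜ

/-- Factor-critical graph. -/
def IsFactorCritical {W : Type*} (H : SimpleGraph W) : Prop :=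
  ∀ v : W, ∃ M : (H.induce ({v}ᶜ : Set W)).Subgraph, M.IsPerfectMatching

namespace Stmt16Aux

open SimpleGraph

variable {V : Type*} [Fintype V]

lemma eq_of_sym2_eq {W : Type*} {a b c : W} (h : s(a, b) = s(a, c)) : b = c := by
  rcases Sym2.eq_iff.mp h with ⟨_, h⟩ | ⟨h1, h2⟩
  · exact h
  · exact h2.trans h1

lemma mem_support_of_mem_edges' {G : SimpleGraph V} {x r b : V} {p : G.Walk x r} {e : Sym2 V}
    (he : e ∈ p.edges) (hb : b ∈ e) : b ∈ p.support := by
  induction e with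
  | _ a c =>
    rcases Sym2.mem_iff.mp hb with rfl | rfl
    · exact p.fst_mem_support_of_mem_edges he
    · exact p.snd_mem_support_of_mem_edges he

lemma mem_support_of_mem_edgeSet {G : SimpleGraph V} {e : Sym2 V} (he : e ∈ G.edgeSet) {x : V}
    (hx : x ∈ e) : x ∈ G.support := by
  induction e with
  | _ a c =>
    have hadj : G.Adj a c := he
    rcases Sym2.mem_iff.mp hx with rfl | rfl
    · exact ⟨c, hadj⟩
    · exact ⟨a, hadj.symm⟩

lemma exists_desc_walk (G : SimpleGraph V) {x r : V} (h : G.Reachable x r) :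
    ∃ p : G.Walk x r, p.length = G.dist x r ∧
      ∀ y ∈ p.support, y = x ∨ G.dist y r < G.dist x r := by
  classical
  obtain ⟨p, hp⟩ := h.exists_walk_length_eq_dist
  refine ⟨p, hp, fun y hy => ?_⟩
  by_cases hyx : y = x
  · exact Or.inl hyx
  · right
    have hspec := p.take_spec hy
    have hlen : (p.takeUntil y hy).length + (p.dropUntil y hy).length = p.length := by
      conv_rhs => rw [← hspec]
      rw [Walk.length_append]
    have h1 : (p.takeUntil y hy).length ≠ 0 := fun h0 =>
      hyx (Walk.eq_of_length_eq_zero h0).symm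
    have h2 : G.dist y r ≤ (p.dropUntil y hy).length := dist_le _
    omega

lemma transfer_reach (G : SimpleGraph V) (s : Set (Sym2 V)) {x r : V}
    (p : G.Walk x r) (hp : ∀ e ∈ s, ∃ b, b ∈ e ∧ b ∉ p.support) :
    (G.deleteEdges s).Reachable x r := by
  refine ⟨p.transfer _ fun e he => ?_⟩
  rw [edgeSet_deleteEdges]
  refine ⟨p.edges_subset_edgeSet he, fun hes => ?_⟩
  obtain ⟨b, hb, hbs⟩ := hp e hes
  exact hbs (mem_support_of_mem_edges' he hb)

lemma support_deleteEdges_subset (G : SimpleGraph V) (s : Set (Sym2 V)) :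
    (G.deleteEdges s).support ⊆ G.support := fun x hx => by
  obtain ⟨y, hy⟩ := hx
  exact ⟨y, (SimpleGraph.deleteEdges_adj.mp hy).1⟩

lemma adj_of_dist_eq_one {G : SimpleGraph V} {x r : V} (h : G.Reachable x r)
    (h1 : G.dist x r = 1) : G.Adj x r := by
  obtain ⟨p, hp⟩ := h.exists_walk_length_eq_dist
  rw [h1] at hp
  cases p with
  | nil => simp at hp
  | cons h' q =>
    have hq : q.length = 0 := by simpa using hp
    exact (Walk.eq_of_length_eq_zero hq) ▸ h'

lemma leaf_step {G : SimpleGraph V} {x r z : V} (hr : G.Reachable x r) (hx : x ≠ r)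
    (huniq : ∀ y, G.Adj x y → y = z) : G.dist z r < G.dist x r := by
  obtain ⟨p, hp⟩ := hr.exists_walk_length_eq_dist
  cases p with
  | nil => exact absurd rfl hx
  | cons h' q =>
    obtain rfl := huniq _ h'
    have hq := dist_le q
    have hp' : q.length + 1 = G.dist x r := by simpa [Nat.add_comm] using hp
    omega

lemma sym2_exists_mem {W : Type*} (e : Sym2 W) : ∃ a, a ∈ e := by
  induction e with
  | _ a b => exact ⟨a, Sym2.mem_mk_left a b⟩

lemma root_mem_edge {G : SimpleGraph V} {r : V}
    (hconn : ∀ x ∈ G.support, G.Reachable x r)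
    (hD1 : ∀ x ∈ G.support, G.dist x r ≤ 1)
    (huniqN : ∀ v ∈ G.support, G.dist v r = 1 → ∀ z, G.Adj v z → ∀ y, G.Adj v y → y = z)
    {e : Sym2 V} (he : e ∈ G.edgeSet) : r ∈ e := by
  induction e with
  | _ a b =>
    have hadj : G.Adj a b := he
    by_contra hre
    rw [Sym2.mem_iff] at hre
    push_neg at hre
    have har : a ≠ r := fun h => hre.1 h.symm
    have haS : a ∈ G.support := ⟨b, hadj⟩
    have ha1 : G.dist a r = 1 := by
      have h1 := hD1 a haS
      have h0 : G.dist a r ≠ 0 := fun h0 => har (((hconn a haS).dist_eq_zero_iff).mp h0)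
      omega
    have hrb := huniqN a haS ha1 b hadj r (adj_of_dist_eq_one (hconn a haS) ha1)
    exact hre.2 hrb

lemma not_mem_support_of_unique_edge {G : SimpleGraph V} {v u : V}
    (huniq : ∀ y, G.Adj v y → y = u)
    {s : Set (Sym2 V)} (hs : s(v, u) ∈ s) : v ∉ (G.deleteEdges s).support := by
  intro hv
  obtain ⟨z, hz⟩ := hv
  obtain ⟨hzadj, hzmem⟩ := SimpleGraph.deleteEdges_adj.mp hz
  obtain rfl := huniq z hzadj
  exact hzmem hs

lemma step (G : SimpleGraph V) (r : V) (hconn : ∀ x ∈ G.support, G.Reachable x r)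
    (h2 : 2 ≤ G.edgeSet.ncard) :
    ∃ e₁ ∈ G.edgeSet, ∃ e₂ ∈ G.edgeSet, e₁ ≠ e₂ ∧ (∃ x, x ∈ e₁ ∧ x ∈ e₂) ∧
      ∀ x ∈ (G.deleteEdges {e₁, e₂}).support, (G.deleteEdges {e₁, e₂}).Reachable x r := by
  classical
  have hEne : G.edgeSet.Nonempty := by
    rw [Set.nonempty_iff_ne_empty]
    intro h
    rw [h, Set.ncard_empty] at h2
    omega
  obtain ⟨e', he'⟩ := hEne
  obtain ⟨a₀, ha₀⟩ := sym2_exists_mem e'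
  have hSne : G.support.Nonempty := ⟨a₀, mem_support_of_mem_edgeSet he' ha₀⟩
  obtain ⟨v₀, hv₀F, hmaxF⟩ := Finset.exists_max_image (Set.toFinite G.support).toFinset
    (fun x => G.dist x r) ((Set.Finite.toFinset_nonempty _).mpr hSne)
  have hv₀S : v₀ ∈ G.support := (Set.Finite.mem_toFinset _).mp hv₀F
  have hmax : ∀ x ∈ G.support, G.dist x r ≤ G.dist v₀ r := fun x hx =>
    hmaxF x ((Set.Finite.mem_toFinset _).mpr hx)
  set D := G.dist v₀ r with hDdef
  have hdist0 : ∀ x ∈ G.support, G.dist x r = 0 → x = r := fun x hx h0 =>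
    ((hconn x hx).dist_eq_zero_iff).mp h0
  have hDpos : 1 ≤ D := by
    by_contra hD
    obtain ⟨y, hy⟩ := id hv₀S
    have hyS : y ∈ G.support := ⟨v₀, hy.symm⟩
    have h0 : G.dist v₀ r = 0 := by omega
    have h0' : G.dist y r = 0 := by have := hmax y hyS; omega
    have e1 := hdist0 v₀ hv₀S h0
    have e2 := hdist0 y hyS h0'
    rw [e1, e2] at hy
    exact G.irrefl hy
  by_cases hA : ∃ v ∈ G.support, G.dist v r = D ∧
      ∃ e₁ ∈ G.edgeSet, ∃ e₂ ∈ G.edgeSet, e₁ ≠ e₂ ∧ v ∈ e₁ ∧ v ∈ e₂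
  · obtain ⟨v, hvS, hvD, e₁, he₁, e₂, he₂, hne, hv1, hv2⟩ := hA
    refine ⟨e₁, he₁, e₂, he₂, hne, ⟨v, hv1, hv2⟩, ?_⟩
    have main : ∀ x ∈ (G.deleteEdges {e₁, e₂}).support, x ≠ v →
        (G.deleteEdges {e₁, e₂}).Reachable x r := by
      intro x hx hxv
      have hxS : x ∈ G.support := support_deleteEdges_subset G _ hx
      obtain ⟨p, hlen, hdesc⟩ := exists_desc_walk G (hconn x hxS)
      apply transfer_reach
      intro e he
      have he'' : e = e₁ ∨ e = e₂ := by simpa using he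
      refine ⟨v, ?_, ?_⟩
      · rcases he'' with rfl | rfl
        · exact hv1
        · exact hv2
      · intro hvp
        rcases hdesc v hvp with h | hlt
        · exact hxv h.symm
        · have := hmax x hxS
          omega
    intro x hx
    by_cases hxv : x = v
    · subst hxv
      obtain ⟨z, hz⟩ := hx
      replace hz : (G.deleteEdges {e₁, e₂}).Adj x z := hz
      exact hz.reachable.trans (main z ⟨x, hz.symm⟩ hz.ne')
    · exact main x hx hxv
  · push_neg at hA
    have huniqE : ∀ v ∈ G.support, G.dist v r = D →
        ∀ e ∈ G.edgeSet, v ∈ e → ∀ e'' ∈ G.edgeSet, v ∈ e'' → e = e'' := by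
      intro v hv hvD e he hve e'' he'' hve''
      by_contra hneq
      exact hA v hv hvD e he e'' he'' hneq hve hve''
    have huniqN : ∀ v ∈ G.support, G.dist v r = D → ∀ z, G.Adj v z →
        ∀ y, G.Adj v y → y = z := by
      intro v hv hvD z hz y hy
      exact eq_of_sym2_eq (huniqE v hv hvD s(v, y) hy (Sym2.mem_mk_left v y)
        s(v, z) hz (Sym2.mem_mk_left v z))
    obtain ⟨u, hadj⟩ := id hv₀S
    have huniq₀ : ∀ y, G.Adj v₀ y → y = u := huniqN v₀ hv₀S rfl u hadj
    have hv₀r : v₀ ≠ r := by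
      intro h
      have h0 : G.dist v₀ r = 0 := by rw [h, SimpleGraph.dist_self]
      omega
    have hdu_lt : G.dist u r < D := by
      have := leaf_step (hconn v₀ hv₀S) hv₀r huniq₀
      omega
    have huS : u ∈ G.support := ⟨v₀, hadj.symm⟩
    have hdu_ge : D ≤ G.dist u r + 1 := by
      obtain ⟨pu, hpu, _⟩ := exists_desc_walk G (hconn u huS)
      have hle := SimpleGraph.dist_le (Walk.cons hadj pu)
      rw [Walk.length_cons, hpu] at hle
      omega
    by_cases hB1 : ∃ s, G.Adj u s ∧ s ≠ v₀ ∧ G.dist s r = D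
    · obtain ⟨s, hus, hsv, hsD⟩ := hB1
      have hsS : s ∈ G.support := ⟨u, hus.symm⟩
      refine ⟨s(v₀, u), hadj, s(u, s), hus, ?_,
        ⟨u, Sym2.mem_mk_right v₀ u, Sym2.mem_mk_left u s⟩, ?_⟩
      · intro h
        rcases Sym2.eq_iff.mp h with ⟨h1, _⟩ | ⟨h1, _⟩
        · exact hadj.ne h1
        · exact hsv h1.symm
      · have huniqS : ∀ y, G.Adj s y → y = u := huniqN s hsS hsD u hus.symm
        have hnotv₀ := not_mem_support_of_unique_edge huniq₀
          (s := {s(v₀, u), s(u, s)}) (by simp)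
        have hnots := not_mem_support_of_unique_edge huniqS
          (s := {s(v₀, u), s(u, s)}) (by simp [Sym2.eq_swap])
        intro x hx
        have hxS := support_deleteEdges_subset G _ hx
        have hxv₀ : x ≠ v₀ := fun h => hnotv₀ (h ▸ hx)
        have hxs : x ≠ s := fun h => hnots (h ▸ hx)
        by_cases hxD : G.dist x r = D
        · obtain ⟨z, hz⟩ := hx
          obtain ⟨hzadj, hzmem⟩ := SimpleGraph.deleteEdges_adj.mp hz
          have hxr : x ≠ r := by
            intro h
            rw [h, SimpleGraph.dist_self] at hxD
            omega
          have hzuniq : ∀ y, G.Adj x y → y = z := huniqN x hxS hxD z hzadj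
          have hzlt : G.dist z r < G.dist x r := leaf_step (hconn x hxS) hxr hzuniq
          have hzS : z ∈ G.support := ⟨x, hzadj.symm⟩
          obtain ⟨pz, hpz, hdescz⟩ := exists_desc_walk G (hconn z hzS)
          have havoid : ∀ b, G.dist b r = D → b ∉ pz.support := by
            intro b hb hbp
            rcases hdescz b hbp with h | h
            · subst h; omega
            · have := hmax z hzS; omega
          refine hz.reachable.trans (transfer_reach G _ pz ?_)
          intro e he
          have he'' : e = s(v₀, u) ∨ e = s(u, s) := by simpa using he
          rcases he'' with rfl | rfl
          · exact ⟨v₀, Sym2.mem_mk_left _ _, havoid v₀ hDdef.symm⟩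
          · exact ⟨s, Sym2.mem_mk_right _ _, havoid s hsD⟩
        · have hxlt : G.dist x r < D := lt_of_le_of_ne (hmax x hxS) hxD
          obtain ⟨p, hp, hdesc⟩ := exists_desc_walk G (hconn x hxS)
          have havoid : ∀ b, G.dist b r = D → b ∉ p.support := by
            intro b hb hbp
            rcases hdesc b hbp with h | h
            · subst h; omega
            · have := hmax x hxS; omega
          apply transfer_reach G _ p
          intro e he
          have he'' : e = s(v₀, u) ∨ e = s(u, s) := by simpa using he
          rcases he'' with rfl | rfl
          · exact ⟨v₀, Sym2.mem_mk_left _ _, havoid v₀ hDdef.symm⟩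
          · exact ⟨s, Sym2.mem_mk_right _ _, havoid s hsD⟩
    · have hnb : ∀ z, G.Adj u z → z ≠ v₀ → G.dist z r < D := by
        intro z hz hzv
        have hzS : z ∈ G.support := ⟨u, hz.symm⟩
        rcases lt_or_eq_of_le (hmax z hzS) with h | h
        · exact h
        · exact absurd ⟨z, hz, hzv, h⟩ hB1
      by_cases hD1 : D = 1
      · -- star case: u = r
        have hur : u = r := hdist0 u huS (by omega)
        obtain ⟨e₂, he₂, hne₂⟩ := Set.exists_ne_of_one_lt_ncard (s := G.edgeSet) (by omega) s(v₀, u)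
        have hD1' : ∀ x ∈ G.support, G.dist x r ≤ 1 := fun x hx => by
          have := hmax x hx; omega
        have huniqN1 : ∀ v ∈ G.support, G.dist v r = 1 → ∀ z, G.Adj v z →
            ∀ y, G.Adj v y → y = z := by
          intro v hv h1
          exact huniqN v hv (by omega)
        have hre₂ : r ∈ e₂ := root_mem_edge hconn hD1' huniqN1 he₂
        have hue₂ : u ∈ e₂ := by rw [hur]; exact hre₂
        refine ⟨s(v₀, u), hadj, e₂, he₂, fun h => hne₂ h.symm,
          ⟨u, Sym2.mem_mk_right _ _, hue₂⟩, ?_⟩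
        have hnotv₀ := not_mem_support_of_unique_edge huniq₀
          (s := {s(v₀, u), e₂}) (by simp)
        intro x hx
        have hxS := support_deleteEdges_subset G _ hx
        have hxv₀ : x ≠ v₀ := fun h => hnotv₀ (h ▸ hx)
        by_cases hxr : x = r
        · subst hxr
          exact Reachable.refl x
        · obtain ⟨z, hz⟩ := hx
          obtain ⟨hzadj, hzmem⟩ := SimpleGraph.deleteEdges_adj.mp hz
          have hx1 : G.dist x r = 1 := by
            have h1 := hD1' x hxS
            have h0 : G.dist x r ≠ 0 := fun h0 => hxr (hdist0 x hxS h0)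
            omega
          have hzr : r = z := huniqN1 x hxS hx1 z hzadj r
            (adj_of_dist_eq_one (hconn x hxS) hx1)
          rw [← hzr] at hz
          exact hz.reachable
      · have hD2 : 2 ≤ D := by omega
        have hur : u ≠ r := by
          intro h
          rw [h, SimpleGraph.dist_self] at hdu_ge
          omega
        obtain ⟨pu, hpu, hpud⟩ := exists_desc_walk G (hconn u huS)
        cases pu with
        | nil => exact absurd rfl hur
        | @cons _ w _ huw q =>
          have hq : q.length + 1 = G.dist u r := by
            rw [← hpu, Walk.length_cons]
          have hwle : G.dist w r ≤ q.length := dist_le q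
          have hwv₀ : w ≠ v₀ := by
            intro h
            subst h
            omega
          refine ⟨s(v₀, u), hadj, s(u, w), huw, ?_,
            ⟨u, Sym2.mem_mk_right _ _, Sym2.mem_mk_left _ _⟩, ?_⟩
          · intro h
            rcases Sym2.eq_iff.mp h with ⟨h1, _⟩ | ⟨h1, _⟩
            · exact hadj.ne h1
            · exact hwv₀ h1.symm
          · have hnotv₀ := not_mem_support_of_unique_edge huniq₀
              (s := {s(v₀, u), s(u, w)}) (by simp)
            intro x hx
            have hxS := support_deleteEdges_subset G _ hx
            have hxv₀ : x ≠ v₀ := fun h => hnotv₀ (h ▸ hx)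
            by_cases hxu : x = u
            · subst hxu
              obtain ⟨z, hz⟩ := hx
              obtain ⟨hzadj, hzmem⟩ := SimpleGraph.deleteEdges_adj.mp hz
              have hzv₀ : z ≠ v₀ := by
                intro h
                subst h
                exact hzmem (by simp [Sym2.eq_swap])
              have hzlt : G.dist z r < D := hnb z hzadj hzv₀
              have hzS : z ∈ G.support := ⟨x, hzadj.symm⟩
              obtain ⟨pz, hpz, hdescz⟩ := exists_desc_walk G (hconn z hzS)
              have huavoid : x ∉ pz.support := by
                intro hbp
                rcases hdescz x hbp with h | h
                · exact hzadj.ne h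
                · omega
              refine hz.reachable.trans (transfer_reach G _ pz ?_)
              intro e he
              have he'' : e = s(v₀, x) ∨ e = s(x, w) := by simpa using he
              rcases he'' with rfl | rfl
              · exact ⟨x, Sym2.mem_mk_right _ _, huavoid⟩
              · exact ⟨x, Sym2.mem_mk_left _ _, huavoid⟩
            · by_cases hxD : G.dist x r = D
              · obtain ⟨z, hz⟩ := hx
                obtain ⟨hzadj, hzmem⟩ := SimpleGraph.deleteEdges_adj.mp hz
                have hxr : x ≠ r := by
                  intro h
                  rw [h, SimpleGraph.dist_self] at hxD
                  omega
                have hzuniq : ∀ y, G.Adj x y → y = z := huniqN x hxS hxD z hzadj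
                have hzu : z ≠ u := by
                  intro h
                  subst h
                  exact hB1 ⟨x, hzadj.symm, hxv₀, hxD⟩
                have hzlt : G.dist z r < G.dist x r := leaf_step (hconn x hxS) hxr hzuniq
                have hzS : z ∈ G.support := ⟨x, hzadj.symm⟩
                obtain ⟨pz, hpz, hdescz⟩ := exists_desc_walk G (hconn z hzS)
                have huavoid : u ∉ pz.support := by
                  intro hbp
                  rcases hdescz u hbp with h | h
                  · exact hzu h.symm
                  · omega
                refine hz.reachable.trans (transfer_reach G _ pz ?_)
                intro e he
                have he'' : e = s(v₀, u) ∨ e = s(u, w) := by simpa using he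
                rcases he'' with rfl | rfl
                · exact ⟨u, Sym2.mem_mk_right _ _, huavoid⟩
                · exact ⟨u, Sym2.mem_mk_left _ _, huavoid⟩
              · have hxlt : G.dist x r < D := lt_of_le_of_ne (hmax x hxS) hxD
                obtain ⟨p, hp, hdesc⟩ := exists_desc_walk G (hconn x hxS)
                have huavoid : u ∉ p.support := by
                  intro hbp
                  rcases hdesc u hbp with h | h
                  · exact hxu h.symm
                  · omega
                apply transfer_reach G _ p
                intro e he
                have he'' : e = s(v₀, u) ∨ e = s(u, w) := by simpa using he
                rcases he'' with rfl | rfl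
                · exact ⟨u, Sym2.mem_mk_right _ _, huavoid⟩
                · exact ⟨u, Sym2.mem_mk_left _ _, huavoid⟩


lemma pairing : ∀ (n : ℕ) (G : SimpleGraph V) (r : V),
    (∀ x ∈ G.support, G.Reachable x r) → G.edgeSet.ncard = n → Even n →
    ∃ f : Sym2 V → Sym2 V, ∀ e ∈ G.edgeSet,
      f e ∈ G.edgeSet ∧ f (f e) = e ∧ f e ≠ e ∧ ∃ x, x ∈ e ∧ x ∈ f e := by
  intro n
  induction n using Nat.strong_induction_on with
  | _ n ih =>
    intro G r hconn hcard heven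
    classical
    rcases Nat.eq_zero_or_pos n with rfl | hpos
    · have hE : G.edgeSet = ∅ := by
        rwa [← Set.ncard_eq_zero (Set.toFinite _)]
      exact ⟨id, fun e he => by simp [hE] at he⟩
    · have h2 : 2 ≤ G.edgeSet.ncard := by
        rcases heven with ⟨k, hk⟩; omega
      obtain ⟨e₁, he₁, e₂, he₂, hne, hshare, hconn''⟩ := step G r hconn h2
      set G'' := G.deleteEdges {e₁, e₂} with hG''def
      have hE'' : G''.edgeSet = G.edgeSet \ {e₁, e₂} := edgeSet_deleteEdges _
      have hcard'' : G''.edgeSet.ncard = n - 2 := by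
        rw [hE'', Set.ncard_diff (by simp [Set.insert_subset_iff, he₁, he₂]) (Set.toFinite _),
          Set.ncard_pair hne, hcard]
      have heven'' : Even (n - 2) := by
        rcases heven with ⟨k, hk⟩; exact ⟨k - 1, by omega⟩
      obtain ⟨f, hf⟩ := ih (n - 2) (by omega) G'' r hconn'' hcard'' heven''
      set Fn : Sym2 V → Sym2 V := (fun e => if e = e₁ then e₂ else if e = e₂ then e₁ else f e)
        with hFndef
      have hFn1 : Fn e₁ = e₂ := by simp [hFndef]
      have hFn2 : Fn e₂ = e₁ := by simp [hFndef, hne.symm]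
      have hFno : ∀ e, e ≠ e₁ → e ≠ e₂ → Fn e = f e := fun e ha hb => by simp [hFndef, ha, hb]
      refine ⟨Fn, fun e he => ?_⟩
      by_cases h1 : e = e₁
      · subst h1
        rw [hFn1, hFn2]
        exact ⟨he₂, rfl, hne.symm, hshare⟩
      · by_cases hh2 : e = e₂
        · subst hh2
          rw [hFn2, hFn1]
          obtain ⟨x, hx1, hx2⟩ := hshare
          exact ⟨he₁, rfl, hne, x, hx2, hx1⟩
        · have he'' : e ∈ G''.edgeSet := by
            rw [hE'']; exact ⟨he, by simp [h1, hh2]⟩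
          obtain ⟨hfe, hff, hfne, hfsh⟩ := hf e he''
          have hfeE : f e ∈ G.edgeSet ∧ f e ∉ ({e₁, e₂} : Set (Sym2 V)) := by
            rw [hE''] at hfe; exact hfe
          have hf1 : f e ≠ e₁ := fun h => hfeE.2 (by simp [h])
          have hf2 : f e ≠ e₂ := fun h => hfeE.2 (by simp [h])
          rw [hFno e h1 hh2, hFno _ hf1 hf2]
          exact ⟨hfeE.1, hff, hfne, hfsh⟩

end Stmt16Aux


theorem stmt16 {V : Type*} [Fintype V] (G : SimpleGraph V) (hc : G.Connected)
    (h2ec : ∀ e ∈ G.edgeSet, (G.deleteEdges {e}).Connected)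
    (h3 : 3 ≤ G.edgeSet.ncard) (hodd : Odd G.edgeSet.ncard) :
    IsFactorCritical G.lineGraph := by
  classical
  intro e₀
  set G' := G.deleteEdges {(e₀ : Sym2 V)} with hG'def
  have hc' : G'.Connected := h2ec e₀ e₀.2
  obtain ⟨r⟩ : Nonempty V := hc'.nonempty
  have hconn' : ∀ x ∈ G'.support, G'.Reachable x r := fun x _ => hc'.preconnected x r
  have hE' : G'.edgeSet = G.edgeSet \ {(e₀ : Sym2 V)} := SimpleGraph.edgeSet_deleteEdges _
  have hcard' : G'.edgeSet.ncard = G.edgeSet.ncard - 1 := by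
    rw [hE', Set.ncard_diff_singleton_of_mem e₀.2]
  have heven' : Even (G.edgeSet.ncard - 1) := by
    obtain ⟨k, hk⟩ := hodd; exact ⟨k, by omega⟩
  obtain ⟨f, hf⟩ := Stmt16Aux.pairing (G.edgeSet.ncard - 1) G' r hconn' hcard' heven'
  have hmem : ∀ a : ({e₀}ᶜ : Set G.edgeSet), ((a : G.edgeSet) : Sym2 V) ∈ G'.edgeSet := by
    intro a
    rw [hE']
    refine ⟨(a : G.edgeSet).2, fun h => a.2 ?_⟩
    have : (a : G.edgeSet) = e₀ := Subtype.ext h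
    simp [this]
  have hmemE : ∀ a : ({e₀}ᶜ : Set G.edgeSet),
      f ((a : G.edgeSet) : Sym2 V) ∈ G.edgeSet \ {(e₀ : Sym2 V)} := fun a => by
    have := (hf _ (hmem a)).1
    rwa [hE'] at this
  let F : ({e₀}ᶜ : Set G.edgeSet) → ({e₀}ᶜ : Set G.edgeSet) := fun a =>
    ⟨⟨f ((a : G.edgeSet) : Sym2 V), (hmemE a).1⟩, fun h => (hmemE a).2 (by
      have : (⟨f ((a : G.edgeSet) : Sym2 V), (hmemE a).1⟩ : G.edgeSet) = e₀ := h
      simpa using congrArg Subtype.val this)⟩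
  have hFval : ∀ a, ((F a : G.edgeSet) : Sym2 V) = f ((a : G.edgeSet) : Sym2 V) := fun a => rfl
  have hFF : ∀ a, F (F a) = a := by
    intro a
    apply Subtype.ext; apply Subtype.ext
    rw [hFval, hFval]
    exact (hf _ (hmem a)).2.1
  refine ⟨⟨Set.univ, fun a b => F a = b, ?_, fun _ => Set.mem_univ _, ?_⟩, ?_, fun v => Set.mem_univ v⟩
  · intro a b hab
    have hab' : ((b : G.edgeSet) : Sym2 V) = f ((a : G.edgeSet) : Sym2 V) := by
      rw [← hab, hFval]
    have hne : ((a : G.edgeSet) : Sym2 V) ≠ ((b : G.edgeSet) : Sym2 V) := by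
      intro h
      exact (hf _ (hmem a)).2.2.1 (hab'.symm.trans h.symm)
    obtain ⟨x, hx1, hx2⟩ := (hf _ (hmem a)).2.2.2
    show G.lineGraph.Adj (a : G.edgeSet) (b : G.edgeSet)
    rw [SimpleGraph.lineGraph_adj_iff_exists]
    exact ⟨fun h => hne (congrArg Subtype.val h), x, hx1, hab' ▸ hx2⟩
  · refine ⟨fun a b hab => ?_⟩
    show F b = a
    rw [← hab, hFF]
  · intro a _
    exact ⟨F a, rfl, fun y hy => (show F a = y from hy).symm⟩
end

section
/- Let G be a unicyclic graph with n vertices whose unique cycle C has length ℓ. Then η_per(G) = n − 2ν(G) − 1 if ℓ is odd and ν(G) = (ℓ−1)/2 + ν(G − V(C)), and η_per(G) = n − 2ν(G) otherwise. -/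
open Polynomial SimpleGraph

section AuxPerm

variable {V : Type*} [Fintype V]

/-- A permutation all of whose non-fixed points move to adjacent vertices. -/
def GoodP (G : SimpleGraph V) (σ : Equiv.Perm V) : Prop := ∀ i, σ i ≠ i → G.Adj (σ i) i

/-- The maximum number of non-fixed points of a good permutation. -/
noncomputable def maxGood (G : SimpleGraph V) : ℕ :=
  sSup {k | ∃ σ : Equiv.Perm V, GoodP G σ ∧ {i | σ i ≠ i}.ncard = k}

lemma goodSet_zero_mem (G : SimpleGraph V) :
    0 ∈ {k | ∃ σ : Equiv.Perm V, GoodP G σ ∧ {i | σ i ≠ i}.ncard = k} := by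
  refine ⟨1, fun i hi => absurd rfl hi, ?_⟩
  simp [Set.ncard_eq_zero]

lemma goodSet_bdd (G : SimpleGraph V) :
    ∀ k ∈ {k | ∃ σ : Equiv.Perm V, GoodP G σ ∧ {i | σ i ≠ i}.ncard = k},
      k ≤ Fintype.card V := by
  rintro k ⟨σ, -, rfl⟩
  have := Set.ncard_le_ncard (Set.subset_univ {i | σ i ≠ i}) Set.finite_univ
  simpa [Set.ncard_univ] using this

lemma le_maxGood (G : SimpleGraph V) {σ : Equiv.Perm V} (h : GoodP G σ) :
    {i | σ i ≠ i}.ncard ≤ maxGood G :=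
  le_csSup ⟨Fintype.card V, goodSet_bdd G⟩ ⟨σ, h, rfl⟩

lemma maxGood_le (G : SimpleGraph V) : maxGood G ≤ Fintype.card V :=
  csSup_le ⟨0, goodSet_zero_mem G⟩ (goodSet_bdd G)

lemma exists_maxGood (G : SimpleGraph V) :
    ∃ σ : Equiv.Perm V, GoodP G σ ∧ {i | σ i ≠ i}.ncard = maxGood G :=
  Nat.sSup_mem ⟨0, goodSet_zero_mem G⟩ ⟨Fintype.card V, goodSet_bdd G⟩

open scoped Classical in
lemma perNullity_eq_sub (G : SimpleGraph V) :
    perNullity G = Fintype.card V - maxGood G := by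
  classical
  set n := Fintype.card V with hn
  set K := maxGood G with hK
  have hKn : K ≤ n := maxGood_le G
  -- the per-permutation term
  have hterm : ∀ σ : Equiv.Perm V,
      (∏ i, ((Polynomial.X : ℤ[X]) • (1 : Matrix V V ℤ[X]) -
        Matrix.of fun i j => if G.Adj i j then (1 : ℤ[X]) else 0) (σ i) i) =
      if GoodP G σ then
        Polynomial.C ((-1 : ℤ) ^ {i | σ i ≠ i}.ncard) * Polynomial.X ^ (n - {i | σ i ≠ i}.ncard)
      else 0 := by
    intro σ
    have hkcard : {i | σ i ≠ i}.ncard = (Finset.univ.filter fun i => ¬ σ i = i).card := by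
      rw [Set.ncard_eq_toFinset_card']
      congr 1
      ext i
      simp
    rw [← Finset.prod_filter_mul_prod_filter_not Finset.univ (fun i => σ i = i)]
    have hfix : ∀ i ∈ Finset.univ.filter (fun i => σ i = i),
        ((Polynomial.X : ℤ[X]) • (1 : Matrix V V ℤ[X]) -
          Matrix.of fun i j => if G.Adj i j then (1 : ℤ[X]) else 0) (σ i) i = Polynomial.X := by
      intro i hi
      simp only [Finset.mem_filter] at hi
      rw [hi.2]
      simp [Matrix.sub_apply, Matrix.smul_apply, Matrix.one_apply_eq, Matrix.of_apply,
        SimpleGraph.irrefl]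
    have hmov : ∀ i ∈ Finset.univ.filter (fun i => ¬ σ i = i),
        ((Polynomial.X : ℤ[X]) • (1 : Matrix V V ℤ[X]) -
          Matrix.of fun i j => if G.Adj i j then (1 : ℤ[X]) else 0) (σ i) i =
        -(if G.Adj (σ i) i then (1 : ℤ[X]) else 0) := by
      intro i hi
      simp only [Finset.mem_filter] at hi
      simp [Matrix.sub_apply, Matrix.smul_apply, Matrix.one_apply_ne hi.2, Matrix.of_apply]
    rw [Finset.prod_congr rfl hfix, Finset.prod_congr rfl hmov]
    rw [Finset.prod_const]
    have hcards : (Finset.univ.filter fun i => σ i = i).card = n - {i | σ i ≠ i}.ncard := by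
      rw [hkcard]
      have h2 := Finset.card_filter_add_card_filter_not (s := (Finset.univ : Finset V))
        (p := fun i => σ i = i)
      have h3 : (Finset.univ : Finset V).card = n := Finset.card_univ
      omega
    rw [hcards]
    by_cases hg : GoodP G σ
    · rw [if_pos hg]
      have : ∀ i ∈ Finset.univ.filter (fun i => ¬ σ i = i),
          -(if G.Adj (σ i) i then (1 : ℤ[X]) else 0) = -1 := by
        intro i hi
        simp only [Finset.mem_filter] at hi
        rw [if_pos (hg i hi.2)]
      rw [Finset.prod_congr rfl this, Finset.prod_const, hkcard]
      rw [mul_comm]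
      congr 1
      rw [← Polynomial.C_1, ← Polynomial.C_neg, ← Polynomial.C_pow]
    · rw [if_neg hg]
      simp only [GoodP, not_forall] at hg
      obtain ⟨i, hi1, hi2⟩ := hg
      rw [Finset.prod_eq_zero (i := i) (by simp [hi1]) (by simp [hi2])]
      ring
  have hpoly : permPoly G = ∑ σ : Equiv.Perm V,
      if GoodP G σ then
        Polynomial.C ((-1 : ℤ) ^ {i | σ i ≠ i}.ncard) * Polynomial.X ^ (n - {i | σ i ≠ i}.ncard)
      else 0 := by
    rw [permPoly, Matrix.permanent]
    exact Finset.sum_congr rfl fun σ _ => hterm σ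
  have hcoeff : ∀ m, (permPoly G).coeff m = ∑ σ : Equiv.Perm V,
      if GoodP G σ ∧ n - {i | σ i ≠ i}.ncard = m then ((-1 : ℤ) ^ {i | σ i ≠ i}.ncard) else 0 := by
    intro m
    rw [hpoly, Polynomial.finset_sum_coeff]
    refine Finset.sum_congr rfl fun σ _ => ?_
    by_cases hg : GoodP G σ
    · rw [if_pos hg, Polynomial.coeff_C_mul, Polynomial.coeff_X_pow]
      by_cases hm : n - {i | σ i ≠ i}.ncard = m
      · rw [if_pos hm.symm, if_pos ⟨hg, hm⟩, mul_one]
      · rw [if_neg (Ne.symm hm), if_neg (by tauto), mul_zero]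
    · rw [if_neg hg, if_neg (by tauto), Polynomial.coeff_zero]
  obtain ⟨σ₀, hσ₀g, hσ₀k⟩ := exists_maxGood G
  have hne : (permPoly G).coeff (n - K) ≠ 0 := by
    rw [hcoeff]
    have hrw : ∀ σ : Equiv.Perm V,
        (if GoodP G σ ∧ n - {i | σ i ≠ i}.ncard = n - K then
          ((-1:ℤ) ^ {i | σ i ≠ i}.ncard) else 0)
        = if GoodP G σ ∧ {i | σ i ≠ i}.ncard = K then ((-1:ℤ)^K) else 0 := by
      intro σ
      by_cases hg : GoodP G σ
      · have hkn : {i | σ i ≠ i}.ncard ≤ n := goodSet_bdd G _ ⟨σ, hg, rfl⟩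
        have hle : {i | σ i ≠ i}.ncard ≤ K := le_maxGood G hg
        by_cases hk : {i | σ i ≠ i}.ncard = K
        · rw [if_pos ⟨hg, by omega⟩, if_pos ⟨hg, hk⟩, hk]
        · rw [if_neg (by rintro ⟨-, h⟩; omega), if_neg (by tauto)]
      · rw [if_neg (by tauto), if_neg (by tauto)]
    rw [Finset.sum_congr rfl fun σ _ => hrw σ, ← Finset.sum_filter, Finset.sum_const]
    have hcard : 0 < (Finset.univ.filter fun σ : Equiv.Perm V =>
        GoodP G σ ∧ {i | σ i ≠ i}.ncard = K).card :=
      Finset.card_pos.2 ⟨σ₀, by simp [hσ₀g, hσ₀k, hK]⟩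
    simp only [nsmul_eq_mul]
    exact mul_ne_zero (by exact_mod_cast hcard.ne') (pow_ne_zero _ (by norm_num))
  have hlow : ∀ m < n - K, (permPoly G).coeff m = 0 := by
    intro m hm
    rw [hcoeff]
    refine Finset.sum_eq_zero fun σ _ => ?_
    rw [if_neg]
    rintro ⟨hg, hmk⟩
    have hle := le_maxGood G hg
    have hkn : {i | σ i ≠ i}.ncard ≤ n := goodSet_bdd G _ ⟨σ, hg, rfl⟩
    omega
  have hp0 : permPoly G ≠ 0 := fun h => hne (by rw [h, Polynomial.coeff_zero])
  rw [perNullity, Polynomial.rootMultiplicity_eq_natTrailingDegree']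
  exact le_antisymm (Polynomial.natTrailingDegree_le_of_ne_zero hne)
    (Polynomial.le_natTrailingDegree hp0 hlow)

/-! ### Matching infrastructure -/

variable {G : SimpleGraph V}

lemma matching_bdd (G : SimpleGraph V) :
    ∀ k ∈ {n | ∃ M : G.Subgraph, M.IsMatching ∧ M.edgeSet.ncard = n}, k ≤ Nat.card (Sym2 V) := by
  rintro k ⟨M, -, rfl⟩
  have := Set.ncard_le_ncard (Set.subset_univ M.edgeSet) Set.finite_univ
  simpa [Set.ncard_univ] using this

lemma matchingNumber_bddAbove (G : SimpleGraph V) :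
    BddAbove {n | ∃ M : G.Subgraph, M.IsMatching ∧ M.edgeSet.ncard = n} :=
  ⟨Nat.card (Sym2 V), matching_bdd G⟩

lemma matchingNumber_nonempty (G : SimpleGraph V) :
    0 ∈ {n | ∃ M : G.Subgraph, M.IsMatching ∧ M.edgeSet.ncard = n} := by
  refine ⟨⊥, fun v hv => absurd hv (by simp [SimpleGraph.Subgraph.verts_bot]), ?_⟩
  simp [SimpleGraph.Subgraph.edgeSet_bot]

lemma le_matchingNumber {M : G.Subgraph} (hM : M.IsMatching) :
    M.edgeSet.ncard ≤ matchingNumber G :=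
  le_csSup (matchingNumber_bddAbove G) ⟨M, hM, rfl⟩

lemma exists_max_matching (G : SimpleGraph V) :
    ∃ M : G.Subgraph, M.IsMatching ∧ M.edgeSet.ncard = matchingNumber G :=
  Nat.sSup_mem ⟨0, matchingNumber_nonempty G⟩ (matchingNumber_bddAbove G)

open scoped Classical in
/-- The partner of a vertex in a matching. -/
noncomputable def mpartner {M : G.Subgraph} (hM : M.IsMatching) (v : V) : V :=
  if h : v ∈ M.verts then (hM h).exists.choose else v

lemma mpartner_adj {M : G.Subgraph} (hM : M.IsMatching) {v : V} (hv : v ∈ M.verts) :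
    M.Adj v (mpartner hM v) := by
  rw [mpartner, dif_pos hv]
  exact (hM hv).exists.choose_spec

lemma mpartner_eq {M : G.Subgraph} (hM : M.IsMatching) {v w : V} (hv : v ∈ M.verts)
    (h : M.Adj v w) : w = mpartner hM v :=
  (hM hv).unique h (mpartner_adj hM hv)

lemma mpartner_mem {M : G.Subgraph} (hM : M.IsMatching) {v : V} (hv : v ∈ M.verts) :
    mpartner hM v ∈ M.verts :=
  M.edge_vert (mpartner_adj hM hv).symm

lemma mpartner_ne {M : G.Subgraph} (hM : M.IsMatching) {v : V} (hv : v ∈ M.verts) :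
    mpartner hM v ≠ v :=
  fun h => (mpartner_adj hM hv).ne (h.symm)

lemma mpartner_invol {M : G.Subgraph} (hM : M.IsMatching) {v : V} (hv : v ∈ M.verts) :
    mpartner hM (mpartner hM v) = v :=
  ((hM (mpartner_mem hM hv)).unique (mpartner_adj hM (mpartner_mem hM hv))
    ((mpartner_adj hM hv).symm))

lemma matching_ncard_verts {M : G.Subgraph} (hM : M.IsMatching) :
    M.verts.ncard = 2 * M.edgeSet.ncard := by
  classical
  rw [Set.ncard_eq_toFinset_card' M.verts, Set.ncard_eq_toFinset_card' M.edgeSet]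
  have hf : ∀ v ∈ M.verts.toFinset, s(v, mpartner hM v) ∈ M.edgeSet.toFinset := by
    intro v hv
    rw [Set.mem_toFinset] at *
    exact mpartner_adj hM hv
  rw [Finset.card_eq_sum_card_fiberwise hf]
  have h2 : ∀ e ∈ M.edgeSet.toFinset,
      (M.verts.toFinset.filter fun v => s(v, mpartner hM v) = e).card = 2 := by
    intro e he
    rw [Set.mem_toFinset] at he
    induction e using Sym2.ind with
    | _ u w =>
      rw [SimpleGraph.Subgraph.mem_edgeSet] at he
      have hne : u ≠ w := he.ne
      have hu : u ∈ M.verts := M.edge_vert he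
      have hw : w ∈ M.verts := M.edge_vert he.symm
      have hset : (M.verts.toFinset.filter fun v => s(v, mpartner hM v) = s(u, w)) = {u, w} := by
        ext v'
        simp only [Finset.mem_filter, Finset.mem_insert, Finset.mem_singleton, Set.mem_toFinset]
        constructor
        · rintro ⟨hv', he'⟩
          rw [Sym2.eq_iff] at he'
          rcases he' with ⟨h1, -⟩ | ⟨h1, -⟩
          · exact Or.inl h1
          · exact Or.inr h1
        · rintro (rfl | rfl)
          · exact ⟨hu, by rw [← mpartner_eq hM hu he]⟩
          · exact ⟨hw, by rw [← mpartner_eq hM hw he.symm]; exact Sym2.eq_swap⟩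
      rw [hset, Finset.card_insert_of_notMem (by simp [hne]), Finset.card_singleton]
  rw [Finset.sum_congr rfl h2, Finset.sum_const, smul_eq_mul, mul_comm]

lemma matching_goodPerm {M : G.Subgraph} (hM : M.IsMatching) :
    ∃ σ : Equiv.Perm V, GoodP G σ ∧ (∀ v, σ (σ v) = v) ∧ {i | σ i ≠ i} = M.verts := by
  classical
  have hinv : Function.Involutive (fun v => if v ∈ M.verts then mpartner hM v else v) := by
    intro v
    by_cases h : v ∈ M.verts
    · simp only [if_pos h, if_pos (mpartner_mem hM h)]
      exact mpartner_invol hM h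
    · simp [h]
  have hfun : ∀ i, (hinv.toPerm _) i = if i ∈ M.verts then mpartner hM i else i := fun _ => rfl
  refine ⟨hinv.toPerm _, ?_, fun v => hinv v, ?_⟩
  · intro i hi
    by_cases h : i ∈ M.verts
    · rw [hfun, if_pos h] at hi ⊢
      exact ((mpartner_adj hM h).adj_sub).symm
    · rw [hfun, if_neg h] at hi
      exact absurd rfl hi
  · ext i
    rw [Set.mem_setOf_eq, hfun]
    by_cases h : i ∈ M.verts
    · simp only [if_pos h, h, iff_true]
      exact mpartner_ne hM h
    · simp [h]

lemma goodPerm_matching {σ : Equiv.Perm V} (hg : GoodP G σ) (hinv : ∀ v, σ (σ v) = v) :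
    ∃ M : G.Subgraph, M.IsMatching ∧ M.verts = {i | σ i ≠ i} := by
  refine ⟨{ verts := {i | σ i ≠ i}
            Adj := fun u v => σ u = v ∧ u ≠ v
            adj_sub := ?_
            edge_vert := ?_
            symm := ?_ }, ?_, rfl⟩
  · rintro u v ⟨h1, h2⟩
    have := hg u (fun h => h2 (h.symm.trans h1))
    rw [h1] at this
    exact this.symm
  · rintro u v ⟨h1, h2⟩
    exact fun h => h2 (h.symm.trans h1)
  · refine ⟨fun u v ⟨h1, h2⟩ => ?_⟩
    exact ⟨h1 ▸ hinv u, fun h => h2 h.symm⟩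
  · intro v hv
    refine ⟨σ v, ⟨rfl, fun h => hv h.symm⟩, fun w hw => hw.1.symm⟩

lemma good_mul {σ₁ σ₂ : Equiv.Perm V} (h1 : GoodP G σ₁) (h2 : GoodP G σ₂)
    (hd : Disjoint {i | σ₁ i ≠ i} {i | σ₂ i ≠ i}) :
    GoodP G (σ₁ * σ₂) ∧ {i | (σ₁ * σ₂) i ≠ i} = {i | σ₁ i ≠ i} ∪ {i | σ₂ i ≠ i} := by
  classical
  have hd' : ∀ i, σ₁ i = i ∨ σ₂ i = i := by
    intro i
    by_contra h
    push_neg at h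
    exact (Set.disjoint_left.1 hd) h.1 h.2
  have key : ∀ i, (σ₁ * σ₂) i = if σ₂ i ≠ i then σ₂ i else σ₁ i := by
    intro i
    by_cases h : σ₂ i = i
    · simp [Equiv.Perm.mul_apply, h]
    · have hσ₂i : σ₂ (σ₂ i) ≠ σ₂ i := fun hc => h (σ₂.injective hc)
      have : σ₁ (σ₂ i) = σ₂ i := by
        rcases hd' (σ₂ i) with h' | h'
        · exact h'
        · exact absurd h' hσ₂i
      simp [Equiv.Perm.mul_apply, h, this]
  constructor
  · intro i hi
    rw [key i] at hi ⊢
    by_cases h : σ₂ i = i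
    · rw [if_neg (not_not_intro h)] at hi ⊢
      exact h1 i hi
    · rw [if_pos h] at hi ⊢
      exact h2 i h
  · ext i
    rw [Set.mem_union, Set.mem_setOf_eq, Set.mem_setOf_eq, Set.mem_setOf_eq, key i]
    by_cases h : σ₂ i = i <;> simp [h]

lemma matching_disjoint_sup {M₁ M₂ : G.Subgraph} (h1 : M₁.IsMatching) (h2 : M₂.IsMatching)
    (hd : Disjoint M₁.verts M₂.verts) :
    (M₁ ⊔ M₂).IsMatching ∧ (M₁ ⊔ M₂).edgeSet.ncard = M₁.edgeSet.ncard + M₂.edgeSet.ncard := by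
  have hds : Disjoint M₁.support M₂.support :=
    hd.mono (SimpleGraph.Subgraph.support_subset_verts _)
      (SimpleGraph.Subgraph.support_subset_verts _)
  refine ⟨h1.sup h2 hds, ?_⟩
  rw [SimpleGraph.Subgraph.edgeSet_sup, Set.ncard_union_eq ?_ (Set.toFinite _) (Set.toFinite _)]
  rw [Set.disjoint_left]
  intro e he1 he2
  induction e using Sym2.ind with
  | _ u w =>
    rw [SimpleGraph.Subgraph.mem_edgeSet] at he1 he2
    exact (Set.disjoint_left.1 hd) (M₁.edge_vert he1) (M₂.edge_vert he2)

lemma matching_ncard_eq_of_verts {M₁ M₂ : G.Subgraph} (h1 : M₁.IsMatching) (h2 : M₂.IsMatching)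
    (h : M₁.verts.ncard = M₂.verts.ncard) : M₁.edgeSet.ncard = M₂.edgeSet.ncard := by
  have := matching_ncard_verts h1
  have := matching_ncard_verts h2
  omega

lemma matchingNumber_induce_ge {s : Set V} [Fintype s] {M : G.Subgraph} (hM : M.IsMatching)
    (hsub : M.verts ⊆ s) : M.edgeSet.ncard ≤ matchingNumber (G.induce s) := by
  classical
  set M' : (G.induce s).Subgraph :=
    { verts := Subtype.val ⁻¹' M.verts
      Adj := fun u v => M.Adj u.1 v.1
      adj_sub := fun h => by simpa using M.adj_sub h
      edge_vert := fun h => M.edge_vert h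
      symm := ⟨fun u v h => h.symm⟩ } with hM'
  have hM'm : M'.IsMatching := by
    intro v hv
    obtain ⟨w, hw, huniq⟩ := hM hv
    refine ⟨⟨w, hsub (M.edge_vert hw.symm)⟩, hw, ?_⟩
    intro y hy
    exact Subtype.ext (huniq y.1 hy)
  have hverts : M'.verts.ncard = M.verts.ncard := by
    have himg : Subtype.val '' M'.verts = M.verts := by
      rw [hM']
      ext v
      simp only [Set.mem_image, Set.mem_preimage]
      constructor
      · rintro ⟨w, hw, rfl⟩; exact hw
      · intro hv; exact ⟨⟨v, hsub hv⟩, hv, rfl⟩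
    rw [← himg, Set.ncard_image_of_injective _ Subtype.val_injective]
  have hedge : M'.edgeSet.ncard = M.edgeSet.ncard := by
    have h1 := matching_ncard_verts hM'm
    have h2 := matching_ncard_verts hM
    omega
  rw [← hedge]
  exact le_matchingNumber hM'm

lemma exists_matching_of_induce (G : SimpleGraph V) (s : Set V) [Fintype s] :
    ∃ M : G.Subgraph, M.IsMatching ∧ M.verts ⊆ s ∧
      M.edgeSet.ncard = matchingNumber (G.induce s) := by
  classical
  obtain ⟨M', hM', hcard⟩ := exists_max_matching (G.induce s)
  refine ⟨M'.map (SimpleGraph.Embedding.induce s).toHom, hM'.map _ Subtype.val_injective, ?_, ?_⟩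
  · rw [SimpleGraph.Subgraph.map_verts]
    rintro v ⟨w, -, rfl⟩
    exact w.2
  · rw [← hcard]
    have h1 := matching_ncard_verts
      (hM'.map (SimpleGraph.Embedding.induce s).toHom Subtype.val_injective)
    have h2 := matching_ncard_verts hM'
    have h3 : (M'.map (SimpleGraph.Embedding.induce s).toHom).verts.ncard = M'.verts.ncard := by
      rw [SimpleGraph.Subgraph.map_verts]
      exact Set.ncard_image_of_injective _ Subtype.val_injective
    omega


/-! ### Walk and cycle infrastructure -/

lemma cycle_list_facts {x : V} (c : G.Walk x x) (hc : c.IsCycle) :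
    c.support.dropLast.Nodup ∧ c.support.dropLast.length = c.length ∧
    (∀ w, w ∈ c.support ↔ w ∈ c.support.dropLast) ∧
    c.support = c.support.dropLast ++ [x] := by
  have hlen3 := hc.three_le_length
  have hslen : c.support.length = c.length + 1 := c.length_support
  have htail : c.support = x :: c.support.tail := c.support_eq_cons
  have htlen : c.support.tail.length = c.length := by
    have := congrArg List.length htail
    simp only [List.length_cons] at this
    omega
  have htne : c.support.tail ≠ [] := by
    intro h
    rw [h] at htlen
    simp at htlen
    omega
  have happ : c.support = c.support.dropLast ++ [x] := by
    conv_lhs => rw [← List.dropLast_append_getLast (c.support_ne_nil), c.getLast_support]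
  have hdlcons : c.support.dropLast = x :: c.support.tail.dropLast := by
    obtain ⟨y, t', ht'⟩ := List.exists_cons_of_ne_nil htne
    rw [htail, ht']
    simp
  have htapp : c.support.tail = c.support.tail.dropLast ++ [x] := by
    have h1 : x :: c.support.tail = x :: (c.support.tail.dropLast ++ [x]) := by
      rw [← List.cons_append, ← hdlcons, ← happ, htail]
      simp
    exact (List.cons.inj h1).2
  have htnd : c.support.tail.Nodup := hc.support_nodup
  have hxnm : x ∉ c.support.tail.dropLast := by
    rw [htapp] at htnd
    have := List.disjoint_of_nodup_append htnd
    exact fun h => this h (by simp)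
  have hnd : c.support.dropLast.Nodup := by
    rw [hdlcons]
    exact List.nodup_cons.2 ⟨hxnm, htnd.sublist (List.dropLast_sublist _)⟩
  have hdlen : c.support.dropLast.length = c.length := by
    rw [List.length_dropLast]
    omega
  refine ⟨hnd, hdlen, ?_, happ⟩
  intro w
  constructor
  · intro hw
    rw [happ, List.mem_append] at hw
    rcases hw with hw | hw
    · exact hw
    · simp only [List.mem_singleton] at hw
      rw [hw, hdlcons]
      exact List.mem_cons_self
  · intro hw
    rw [happ, List.mem_append]
    exact Or.inl hw

lemma cycle_support_ncard {x : V} (c : G.Walk x x) (hc : c.IsCycle) :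
    {w | w ∈ c.support}.ncard = c.length := by
  classical
  obtain ⟨hnd, hlen, hmem, -⟩ := cycle_list_facts c hc
  have hset : {w | w ∈ c.support} = ↑(c.support.dropLast.toFinset) := by
    ext w
    simp [hmem w]
  rw [hset, Set.ncard_coe_finset, List.toFinset_card_of_nodup hnd, hlen]

lemma cycle_adj_getElem {x : V} (c : G.Walk x x) (hc : c.IsCycle) {j : ℕ}
    (hj : j < c.support.dropLast.length) :
    G.Adj (c.support.dropLast[j])
      (c.support.dropLast[(j+1) % c.support.dropLast.length]'
        (Nat.mod_lt _ (by omega))) := by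
  obtain ⟨hnd, hlen, hmem, happ⟩ := cycle_list_facts c hc
  have hdl : c.darts.length = c.length := c.length_darts
  have hslen : c.support.length = c.length + 1 := c.length_support
  have hj' : j < c.darts.length := by omega
  have hfst : (c.darts[j]'hj').fst = c.support.dropLast[j] := by
    have h2 := List.getElem_of_eq c.map_fst_darts (by simpa using hj')
    rw [List.getElem_map] at h2
    exact h2
  have htlen : c.support.tail.length = c.length := by
    rw [List.length_tail, hslen]
    omega
  have hsnd : (c.darts[j]'hj').snd = c.support.tail[j]'(by omega) := by
    have h2 := List.getElem_of_eq c.map_snd_darts (by simpa using hj')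
    rw [List.getElem_map] at h2
    exact h2
  have hsnd2 : c.support.tail[j]'(by omega) = c.support[j+1]'(by omega) :=
    List.getElem_tail _
  have hsnd3 : c.support[j+1]'(by omega) =
      c.support.dropLast[(j+1) % c.support.dropLast.length]'(Nat.mod_lt _ (by omega)) := by
    have h4 := List.getElem_of_eq happ (i := j+1) (by omega)
    by_cases hcase : j + 1 < c.support.dropLast.length
    · rw [h4, List.getElem_append_left hcase]
      congr 1
      rw [Nat.mod_eq_of_lt hcase]
    · have hj1 : j + 1 = c.support.dropLast.length := by omega
      have h5 : c.support[j+1]'(by omega) = x := by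
        rw [h4, List.getElem_append_right (by omega)]
        simp [hj1]
      have hm0 : (j+1) % c.support.dropLast.length = 0 := by
        rw [hj1, Nat.mod_self]
      have h8 : c.support.dropLast[(j+1) % c.support.dropLast.length]'
          (Nat.mod_lt _ (by omega)) = c.support[0]'(by omega) := by
        have h9 := List.getElem_of_eq happ (i := 0) (by omega)
        rw [h9, List.getElem_append_left (by omega)]
        congr 1
      have h10 : c.support[0]'(by omega) = x := by
        have h11 := List.getElem_of_eq c.support_eq_cons (i := 0) (by omega)
        rw [h11]
        simp
      rw [h5, h8, h10]
  have hadj := (c.darts[j]'hj').adj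
  rwa [hfst, hsnd, hsnd2, hsnd3] at hadj

lemma cycle_goodPerm {x : V} (c : G.Walk x x) (hc : c.IsCycle) :
    ∃ σ : Equiv.Perm V, GoodP G σ ∧ {i | σ i ≠ i} = {w | w ∈ c.support} := by
  classical
  obtain ⟨hnd, hlen, hmem, happ⟩ := cycle_list_facts c hc
  have hlen3 := hc.three_le_length
  refine ⟨c.support.dropLast.formPerm, ?_, ?_⟩
  · intro i hi
    have him : i ∈ c.support.dropLast := by
      by_contra h
      exact hi (List.formPerm_apply_of_notMem h)
    obtain ⟨j, hj, rfl⟩ := List.mem_iff_getElem.1 him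
    rw [List.formPerm_apply_getElem _ hnd j hj]
    exact (cycle_adj_getElem c hc hj).symm
  · have hsp := List.support_formPerm_of_nodup' c.support.dropLast hnd
      (fun y hy => by rw [hy] at hlen; simp at hlen; omega)
    ext i
    rw [Set.mem_setOf_eq]
    constructor
    · intro hi
      have : i ∈ ({y | c.support.dropLast.formPerm y ≠ y} : Set V) := hi
      rw [hsp] at this
      simp only [Finset.coe_sort_coe, Finset.mem_coe, List.mem_toFinset] at this
      exact (hmem i).2 this
    · intro hi
      have : i ∈ (↑(c.support.dropLast.toFinset) : Set V) := by
        simp only [Finset.mem_coe, List.mem_toFinset]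
        exact (hmem i).1 hi
      rw [← hsp] at this
      exact this

lemma path_matching : ∀ (n : ℕ) {u v : V} (p : G.Walk u v), p.length = n → p.IsPath →
    ∃ M : G.Subgraph, M.IsMatching ∧ M.verts ⊆ {w | w ∈ p.support} ∧
      M.edgeSet.ncard = (p.length + 1) / 2 := by
  intro n
  induction n using Nat.strong_induction_on with
  | _ n ih =>
    intro u v p hlen hp
    cases p with
    | nil =>
      refine ⟨⊥, fun v hv => absurd hv (by simp), by simp, ?_⟩
      simp
    | @cons _ w1 _ h p' =>
      cases p' with
      | nil =>
        refine ⟨G.subgraphOfAdj h, SimpleGraph.Subgraph.IsMatching.subgraphOfAdj h, ?_, ?_⟩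
        · intro y hy
          simp only [SimpleGraph.subgraphOfAdj_verts, Set.mem_insert_iff,
            Set.mem_singleton_iff] at hy
          rcases hy with rfl | rfl <;> simp [SimpleGraph.Walk.support_cons]
        · rw [SimpleGraph.edgeSet_subgraphOfAdj]
          simp
      | @cons _ w2 _ h' q =>
        have hq : q.IsPath := (hp.of_cons).of_cons
        have hql : q.length < n := by
          simp only [SimpleGraph.Walk.length_cons] at hlen
          omega
        obtain ⟨M, hM, hsub, hcard⟩ := ih q.length hql q rfl hq
        have hnd := hp.support_nodup
        rw [SimpleGraph.Walk.support_cons, SimpleGraph.Walk.support_cons] at hnd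
        have hun : u ∉ q.support := by
          intro hu
          exact (List.nodup_cons.1 hnd).1 (by simp [hu])
        have hw1n : w1 ∉ q.support := by
          intro hw
          exact (List.nodup_cons.1 (List.nodup_cons.1 hnd).2).1 hw
        have hdisj : Disjoint (G.subgraphOfAdj h).verts M.verts := by
          rw [Set.disjoint_left]
          intro a ha ha'
          simp only [SimpleGraph.subgraphOfAdj_verts, Set.mem_insert_iff,
            Set.mem_singleton_iff] at ha
          have := hsub ha'
          rcases ha with rfl | rfl
          · exact hun this
          · exact hw1n this
        obtain ⟨hm, hcount⟩ := matching_disjoint_sup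
          (SimpleGraph.Subgraph.IsMatching.subgraphOfAdj h) hM hdisj
        refine ⟨G.subgraphOfAdj h ⊔ M, hm, ?_, ?_⟩
        · rw [SimpleGraph.Subgraph.verts_sup]
          intro y hy
          rcases hy with hy | hy
          · simp only [SimpleGraph.subgraphOfAdj_verts, Set.mem_insert_iff,
              Set.mem_singleton_iff] at hy
            rcases hy with rfl | rfl <;>
              simp [SimpleGraph.Walk.support_cons]
          · have := hsub hy
            simp only [Set.mem_setOf_eq] at this ⊢
            simp [SimpleGraph.Walk.support_cons, this]
        · rw [hcount, hcard, SimpleGraph.edgeSet_subgraphOfAdj]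
          simp only [SimpleGraph.Walk.length_cons]
          rw [Set.ncard_singleton]
          omega

lemma matchingNumber_cycle_bound {x : V} (c : G.Walk x x) (hc : c.IsCycle)
    [Fintype ↑({w | w ∈ c.support}ᶜ : Set V)] :
    c.length / 2 + matchingNumber (G.induce ({w | w ∈ c.support}ᶜ : Set V)) ≤
      matchingNumber G := by
  cases c with
  | nil => exact absurd hc.three_le_length (by simp)
  | @cons _ w1 _ h q =>
    have hq : q.IsPath := ((SimpleGraph.Walk.cons_isCycle_iff q h).1 hc).1
    obtain ⟨M1, hM1, hsub1, hcard1⟩ := path_matching q.length q rfl hq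
    obtain ⟨M2, hM2, hsub2, hcard2⟩ := exists_matching_of_induce G
      ({w | w ∈ (SimpleGraph.Walk.cons h q).support}ᶜ : Set V)
    have hdisj : Disjoint M1.verts M2.verts := by
      rw [Set.disjoint_left]
      intro a ha ha'
      have h1 := hsub1 ha
      have h2 := hsub2 ha'
      apply h2
      simp only [Set.mem_setOf_eq] at h1 ⊢
      simp [SimpleGraph.Walk.support_cons, h1]
    obtain ⟨hm, hcount⟩ := matching_disjoint_sup hM1 hM2 hdisj
    have hle := le_matchingNumber hm
    rw [hcount, hcard1, hcard2] at hle
    simp only [SimpleGraph.Walk.length_cons]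
    omega


/-! ### Orbit extraction -/

lemma perm_periodic (σ : Equiv.Perm V) (x₀ : V) : x₀ ∈ Function.periodicPts ⇑σ := by
  classical
  refine Function.mk_mem_periodicPts (n := orderOf σ) (orderOf_pos σ) ?_
  show (⇑σ)^[orderOf σ] x₀ = x₀
  rw [Equiv.Perm.iterate_eq_pow, pow_orderOf_eq_one]
  rfl

lemma orbit_nonfix {σ : Equiv.Perm V} {x₀ : V} (hσx : σ x₀ ≠ x₀) (j : ℕ) :
    σ ((⇑σ)^[j] x₀) ≠ (⇑σ)^[j] x₀ := by
  intro h
  apply hσx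
  have h1 : (⇑σ)^[j] (σ x₀) = (⇑σ)^[j] x₀ := by
    rw [← Function.iterate_succ_apply, Function.iterate_succ_apply']
    exact h
  exact σ.injective.iterate j h1

lemma orbit_mod {σ : Equiv.Perm V} {x₀ : V} (j : ℕ)
    (hj : j ≤ Function.minimalPeriod ⇑σ x₀) :
    (⇑σ)^[j % Function.minimalPeriod ⇑σ x₀] x₀ = (⇑σ)^[j] x₀ := by
  rcases eq_or_lt_of_le hj with rfl | hlt
  · rw [Nat.mod_self]
    exact (Function.isPeriodicPt_minimalPeriod ⇑σ x₀).symm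
  · rw [Nat.mod_eq_of_lt hlt]

lemma orbit_inv {σ : Equiv.Perm V} {x₀ : V} (hσx : σ x₀ ≠ x₀) (y : V) :
    σ y ∈ (fun k => (⇑σ)^[k] x₀) '' Set.Iio (Function.minimalPeriod ⇑σ x₀) ↔
    y ∈ (fun k => (⇑σ)^[k] x₀) '' Set.Iio (Function.minimalPeriod ⇑σ x₀) := by
  have hmp : x₀ ∈ Function.periodicPts ⇑σ := perm_periodic σ x₀
  have hm_pos : 0 < Function.minimalPeriod ⇑σ x₀ :=
    Function.minimalPeriod_pos_of_mem_periodicPts hmp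
  set m := Function.minimalPeriod ⇑σ x₀ with hm
  have hperm : (⇑σ)^[m] x₀ = x₀ := Function.isPeriodicPt_minimalPeriod ⇑σ x₀
  constructor
  · rintro ⟨j, hj, hjy⟩
    simp only [Set.mem_Iio] at hj
    rcases Nat.eq_zero_or_pos j with rfl | hjpos
    · refine ⟨m - 1, Set.mem_Iio.2 (by omega), ?_⟩
      apply σ.injective
      show σ ((⇑σ)^[m-1] x₀) = σ y
      have h2 : σ ((⇑σ)^[m-1] x₀) = (⇑σ)^[m-1+1] x₀ :=
        (Function.iterate_succ_apply' (⇑σ) (m-1) x₀).symm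
      have h3 : m - 1 + 1 = m := by omega
      rw [h2, h3, hperm, ← hjy]
      rfl
    · refine ⟨j - 1, Set.mem_Iio.2 (by omega), ?_⟩
      apply σ.injective
      show σ ((⇑σ)^[j-1] x₀) = σ y
      have h2 : σ ((⇑σ)^[j-1] x₀) = (⇑σ)^[j-1+1] x₀ :=
        (Function.iterate_succ_apply' (⇑σ) (j-1) x₀).symm
      have h3 : j - 1 + 1 = j := by omega
      rw [h2, h3, ← hjy]
  · rintro ⟨j, hj, rfl⟩
    simp only [Set.mem_Iio] at hj
    refine ⟨(j + 1) % m, Set.mem_Iio.2 (Nat.mod_lt _ hm_pos), ?_⟩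
    show (⇑σ)^[(j+1) % m] x₀ = σ ((⇑σ)^[j] x₀)
    rw [orbit_mod (j+1) (by omega), Function.iterate_succ_apply']

lemma good_orbit_cycle {σ : Equiv.Perm V} (hg : GoodP G σ) {x₀ : V} (hx : σ (σ x₀) ≠ x₀) :
    ∃ d : G.Walk x₀ x₀, d.IsCycle ∧
      {w | w ∈ d.support} = (fun k => (⇑σ)^[k] x₀) '' Set.Iio (Function.minimalPeriod ⇑σ x₀) ∧
      d.length = Function.minimalPeriod ⇑σ x₀ := by
  classical
  have hσx : σ x₀ ≠ x₀ := fun h => hx (by rw [h, h])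
  have hmp : x₀ ∈ Function.periodicPts ⇑σ := perm_periodic σ x₀
  have hm_pos : 0 < Function.minimalPeriod ⇑σ x₀ :=
    Function.minimalPeriod_pos_of_mem_periodicPts hmp
  set m := Function.minimalPeriod ⇑σ x₀ with hm
  set f : ℕ → V := fun k => (⇑σ)^[k] x₀ with hf
  have hperm : f m = x₀ := Function.isPeriodicPt_minimalPeriod ⇑σ x₀
  have hinj : Set.InjOn f (Set.Iio m) := Function.iterate_injOn_Iio_minimalPeriod
  have hm1 : m ≠ 1 := by
    intro h
    apply hσx
    have h2 := hperm
    rw [h] at h2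
    exact h2
  have hm2 : m ≠ 2 := by
    intro h
    apply hx
    have h2 := hperm
    rw [h] at h2
    exact h2
  have hm3 : 3 ≤ m := by omega
  have hnonfix : ∀ j, σ (f j) ≠ f j := fun j => orbit_nonfix hσx j
  have hsucc : ∀ j, f (j + 1) = σ (f j) := fun j => Function.iterate_succ_apply' σ j x₀
  have hadj : ∀ j, G.Adj (f (j+1)) (f j) := by
    intro j
    rw [hsucc j]
    exact hg (f j) (hnonfix j)
  have hmod : ∀ j ≤ m, f (j % m) = f j := fun j hj => orbit_mod j hj
  have key : ∀ k, ∃ d : G.Walk (f k) x₀,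
      d.support = ((List.range (k+1)).reverse.map f) ∧
      d.edges = ((List.range k).reverse.map fun j => s(f (j+1), f j)) ∧ d.length = k := by
    intro k
    induction k with
    | zero => exact ⟨SimpleGraph.Walk.nil, by simp [List.range_succ]; rfl, by simp; rfl, rfl⟩
    | succ k ih =>
      obtain ⟨d, hsup, hedg, hlen⟩ := ih
      refine ⟨SimpleGraph.Walk.cons (hadj k) d, ?_, ?_, ?_⟩
      · rw [SimpleGraph.Walk.support_cons, hsup]
        simp [List.range_succ]
      · rw [SimpleGraph.Walk.edges_cons, hedg]
        simp [List.range_succ]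
      · simp [SimpleGraph.Walk.length_cons, hlen]
  obtain ⟨d₀, hsup0, hedg0, hlen0⟩ := key m
  refine ⟨d₀.copy hperm rfl, ?_, ?_, ?_⟩
  · have hdsup : (d₀.copy hperm rfl).support = (List.range (m+1)).reverse.map f := by
      rw [SimpleGraph.Walk.support_copy]; exact hsup0
    have hdedg : (d₀.copy hperm rfl).edges =
        (List.range m).reverse.map fun j => s(f (j+1), f j) := by
      rw [SimpleGraph.Walk.edges_copy]; exact hedg0
    have hdlen : (d₀.copy hperm rfl).length = m := by
      rw [SimpleGraph.Walk.length_copy]; exact hlen0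
    have hinj2 : ∀ i ∈ (List.range m).reverse, ∀ j ∈ (List.range m).reverse,
        s(f (i+1), f i) = s(f (j+1), f j) → i = j := by
      intro i hi j hj hij
      rw [List.mem_reverse, List.mem_range] at hi hj
      rw [Sym2.eq_iff] at hij
      rcases hij with ⟨-, h2⟩ | ⟨h1, h2⟩
      · exact hinj hi hj h2
      · rw [← hmod (i+1) (by omega)] at h1
        rw [← hmod (j+1) (by omega)] at h2
        have e1 : (i+1) % m = j := hinj (Set.mem_Iio.2 (Nat.mod_lt _ hm_pos)) hj h1
        have e2 : i = (j+1) % m := hinj hi (Set.mem_Iio.2 (Nat.mod_lt _ hm_pos)) h2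
        by_cases hi1 : i + 1 < m
        · rw [Nat.mod_eq_of_lt hi1] at e1
          by_cases hj1 : j + 1 < m
          · rw [Nat.mod_eq_of_lt hj1] at e2
            omega
          · have : j + 1 = m := by omega
            rw [this, Nat.mod_self] at e2
            omega
        · have : i + 1 = m := by omega
          rw [this, Nat.mod_self] at e1
          by_cases hj1 : j + 1 < m
          · rw [Nat.mod_eq_of_lt hj1] at e2
            omega
          · have h' : j + 1 = m := by omega
            rw [h', Nat.mod_self] at e2
            omega
    refine ⟨⟨⟨?_⟩, ?_⟩, ?_⟩
    · rw [hdedg]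
      exact List.Nodup.map_on hinj2 (List.nodup_reverse.2 List.nodup_range)
    · intro hnil
      have := hdlen
      rw [hnil] at this
      simp at this
      omega
    · rw [hdsup, List.range_succ]
      simp only [List.reverse_append, List.reverse_cons, List.reverse_nil, List.nil_append,
        List.singleton_append, List.map_cons, List.tail_cons]
      refine List.Nodup.map_on ?_ (List.nodup_reverse.2 List.nodup_range)
      intro i hi j hj hij
      rw [List.mem_reverse, List.mem_range] at hi hj
      exact hinj hi hj hij
  · rw [SimpleGraph.Walk.support_copy, hsup0]
    ext w
    simp only [Set.mem_setOf_eq, List.mem_map, List.mem_reverse, List.mem_range, Set.mem_image,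
      Set.mem_Iio]
    constructor
    · rintro ⟨j, hj, rfl⟩
      by_cases hjm : j < m
      · exact ⟨j, hjm, rfl⟩
      · have : j = m := by omega
        refine ⟨0, by omega, ?_⟩
        rw [this, hperm]
        rfl
    · rintro ⟨j, hj, rfl⟩
      exact ⟨j, by omega, rfl⟩
  · rw [SimpleGraph.Walk.length_copy]; exact hlen0


/-! ### Upper bound for good permutations -/

lemma good_upper {x : V} (c : G.Walk x x) (hc : c.IsCycle)
    (huniq : ∀ (y : V) (d : G.Walk y y), d.IsCycle →
      {w | w ∈ d.support} = {w | w ∈ c.support})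
    [Fintype ↑({w | w ∈ c.support}ᶜ : Set V)]
    {σ : Equiv.Perm V} (hσ : GoodP G σ) :
    {i | σ i ≠ i}.ncard ≤ 2 * matchingNumber G ∨
    {i | σ i ≠ i}.ncard ≤ c.length +
      2 * matchingNumber (G.induce ({w | w ∈ c.support}ᶜ : Set V)) := by
  classical
  by_cases hinv : ∀ y, σ (σ y) = y
  · left
    obtain ⟨M, hM, hMv⟩ := goodPerm_matching hσ hinv
    rw [← hMv, matching_ncard_verts hM]
    exact Nat.mul_le_mul_left 2 (le_matchingNumber hM)
  · right
    push_neg at hinv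
    obtain ⟨x₀, hx₀⟩ := hinv
    obtain ⟨d, hd, hdsup, -⟩ := good_orbit_cycle hσ hx₀
    have hσx₀ : σ x₀ ≠ x₀ := fun h => hx₀ (by rw [h, h])
    have hOS : (fun k => (⇑σ)^[k] x₀) '' Set.Iio (Function.minimalPeriod ⇑σ x₀) =
        {w | w ∈ c.support} := by
      rw [← hdsup]
      exact huniq x₀ d hd
    have hSinv : ∀ y, σ y ∈ {w | w ∈ c.support} ↔ y ∈ {w | w ∈ c.support} := by
      intro y
      rw [← hOS]
      exact orbit_inv hσx₀ y
    have hSnf : ∀ w ∈ {w | w ∈ c.support}, σ w ≠ w := by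
      intro w hw
      rw [← hOS] at hw
      obtain ⟨j, -, rfl⟩ := hw
      exact orbit_nonfix hσx₀ j
    set R := {i | σ i ≠ i} \ {w | w ∈ c.support} with hR
    have hR2 : ∀ y ∈ R, σ (σ y) = y := by
      intro y hy
      by_contra hyy
      obtain ⟨d', hd', hdsup', -⟩ := good_orbit_cycle hσ hyy
      have h1 := huniq y d' hd'
      have hy_in : y ∈ {w | w ∈ d'.support} := by
        rw [hdsup']
        exact ⟨0, Set.mem_Iio.2 (Function.minimalPeriod_pos_of_mem_periodicPts
          (perm_periodic σ y)), rfl⟩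
      rw [h1] at hy_in
      exact hy.2 hy_in
    have hRinv : ∀ y ∈ R, σ y ∈ R := by
      intro y hy
      refine ⟨?_, ?_⟩
      · show σ (σ y) ≠ σ y
        rw [hR2 y hy]
        exact fun h => hy.1 h.symm
      · intro hmem
        exact hy.2 ((hSinv y).1 hmem)
    have hτinv : Function.Involutive (fun i => if i ∈ R then σ i else i) := by
      intro i
      by_cases h : i ∈ R
      · simp only [if_pos h, if_pos (hRinv i h)]
        exact hR2 i h
      · simp only [if_neg h, if_neg h]
    have hτfun : ∀ i, (hτinv.toPerm _) i = if i ∈ R then σ i else i := fun i => rfl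
    have hτg : GoodP G (hτinv.toPerm _) := by
      intro i hi
      rw [hτfun] at hi ⊢
      by_cases h : i ∈ R
      · rw [if_pos h] at hi ⊢
        exact hσ i h.1
      · rw [if_neg h] at hi
        exact absurd rfl hi
    have hτ2 : ∀ v, (hτinv.toPerm _) ((hτinv.toPerm _) v) = v := fun v => hτinv v
    have hτsupp : {i | (hτinv.toPerm _) i ≠ i} = R := by
      ext i
      rw [Set.mem_setOf_eq, hτfun]
      by_cases h : i ∈ R
      · simp only [if_pos h, h, iff_true]
        exact h.1
      · simp [h]
    obtain ⟨M, hM, hMv⟩ := goodPerm_matching hτg hτ2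
    rw [hτsupp] at hMv
    have hMsub : M.verts ⊆ ({w | w ∈ c.support}ᶜ : Set V) := by
      rw [hMv]
      exact fun y hy => hy.2
    have hMle : M.edgeSet.ncard ≤ matchingNumber (G.induce ({w | w ∈ c.support}ᶜ : Set V)) :=
      matchingNumber_induce_ge hM hMsub
    have hsplit : {i | σ i ≠ i} = {w | w ∈ c.support} ∪ R := by
      ext i
      simp only [Set.mem_union, hR, Set.mem_diff, Set.mem_setOf_eq]
      constructor
      · intro h
        by_cases hs : i ∈ c.support
        · exact Or.inl hs
        · exact Or.inr ⟨h, hs⟩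
      · rintro (h | h)
        · exact hSnf i h
        · exact h.1
    have hdisj : Disjoint ({w | w ∈ c.support} : Set V) R := by
      rw [Set.disjoint_right]
      exact fun i hi => hi.2
    rw [hsplit, Set.ncard_union_eq hdisj (Set.toFinite _) (Set.toFinite _)]
    have hScard : ({w | w ∈ c.support} : Set V).ncard = c.length := cycle_support_ncard c hc
    have hRcard : R.ncard = 2 * M.edgeSet.ncard := by
      rw [← hMv, matching_ncard_verts hM]
    omega


end AuxPerm

open scoped Classical in
theorem stmt19 {V : Type*} [Fintype V] (G : SimpleGraph V) (hconn : G.Connected)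
    (hcard : G.edgeSet.ncard = Fintype.card V)
    {x : V} (c : G.Walk x x) (hc : c.IsCycle)
    (huniq : ∀ (y : V) (d : G.Walk y y), d.IsCycle →
      {w | w ∈ d.support} = {w | w ∈ c.support}) :
    ((Odd c.length ∧
        matchingNumber G =
          (c.length - 1) / 2 + matchingNumber (G.induce ({w | w ∈ c.support}ᶜ : Set V))) →
      (perNullity G : ℤ) = (Fintype.card V : ℤ) - 2 * matchingNumber G - 1) ∧
    (¬(Odd c.length ∧
        matchingNumber G =
          (c.length - 1) / 2 + matchingNumber (G.induce ({w | w ∈ c.support}ᶜ : Set V))) →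
      (perNullity G : ℤ) = (Fintype.card V : ℤ) - 2 * matchingNumber G) := by
  classical
  have hK := perNullity_eq_sub G
  have hlow1 : 2 * matchingNumber G ≤ maxGood G := by
    obtain ⟨M, hM, hMcard⟩ := exists_max_matching G
    obtain ⟨σ, hσg, -, hσs⟩ := matching_goodPerm hM
    have h1 := le_maxGood G hσg
    rw [hσs, matching_ncard_verts hM, hMcard] at h1
    exact h1
  have hcomb := matchingNumber_cycle_bound c hc
  have hup := fun (σ : Equiv.Perm V) (hσ : GoodP G σ) => good_upper c hc huniq hσ
  have hl3 := hc.three_le_length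
  have hKn : maxGood G ≤ Fintype.card V := maxGood_le G
  constructor
  · rintro ⟨hodd, heq⟩
    obtain ⟨t, ht⟩ := hodd
    have hlow2 : c.length + 2 * matchingNumber (G.induce ({w | w ∈ c.support}ᶜ : Set V)) ≤
        maxGood G := by
      obtain ⟨σ₁, h1g, h1s⟩ := cycle_goodPerm c hc
      obtain ⟨M, hM, hMsub, hMcard⟩ := exists_matching_of_induce G
        ({w | w ∈ c.support}ᶜ : Set V)
      obtain ⟨σ₂, h2g, -, h2s⟩ := matching_goodPerm hM
      have hdisj : Disjoint {i | σ₁ i ≠ i} {i | σ₂ i ≠ i} := by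
        rw [h1s, h2s, Set.disjoint_left]
        intro a ha ha2
        exact (hMsub ha2) ha
      obtain ⟨hgm, hsm⟩ := good_mul h1g h2g hdisj
      have h1 := le_maxGood G hgm
      rw [hsm, Set.ncard_union_eq hdisj (Set.toFinite _) (Set.toFinite _), h1s, h2s,
        cycle_support_ncard c hc, matching_ncard_verts hM, hMcard] at h1
      exact h1
    have hKval : maxGood G = 2 * matchingNumber G + 1 := by
      refine le_antisymm ?_ (by omega)
      obtain ⟨σ, hσg, hσk⟩ := exists_maxGood G
      rcases hup σ hσg with h | h <;> omega
    rw [hK, hKval]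
    omega
  · intro hnot
    have hKval : maxGood G = 2 * matchingNumber G := by
      refine le_antisymm ?_ hlow1
      obtain ⟨σ, hσg, hσk⟩ := exists_maxGood G
      rcases hup σ hσg with h | h
      · omega
      · by_cases hodd : Odd c.length
        · obtain ⟨t, ht⟩ := hodd
          have hne : matchingNumber G ≠ (c.length - 1) / 2 +
              matchingNumber (G.induce ({w | w ∈ c.support}ᶜ : Set V)) :=
            fun h' => hnot ⟨⟨t, ht⟩, h'⟩
          omega
        · have heven : c.length % 2 = 0 := Nat.even_iff.1 (Nat.not_odd_iff_even.1 hodd)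
          omega
    rw [hK, hKval]
    omega
end
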